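/- Let R be a semiartinian von Neumann regular ring with primitive factors artinian, with socle sequence (S_α)_{α ≤ σ+1}. If M is a weakly R-projective right R-module with socle sequence (M_β), then M_β = M·S_β for every β (in particular the β-th layer of M is a projective R/S_β-module, i.e., M is layer projective). -/

import Mathlib

universe u

open Submodule

/-- The socle of a module: the supremum of all simple submodules. -/
noncomputable def socle (R : Type u) [Ring R] (M : Type u) [AddCommGroup M] [Module R M] :
    Submodule R M :=
  sSup {S : Submodule R M | IsAtom S}

/-- The Loewy (socle) sequence of a module, defined by transfinite recursion:
`loewy R M 0 = ⊥`, `loewy R M (α+1) / loewy R M α = Soc (M ⧸ loewy R M α)`, and unions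
at limit ordinals. -/
noncomputable def loewy (R : Type u) [Ring R] (M : Type u) [AddCommGroup M] [Module R M]
    (o : Ordinal.{u}) : Submodule R M :=
  o.limitRecOn ⊥ (fun _ N => (socle R (M ⧸ N)).comap N.mkQ)
    (fun o _ IH => ⨆ (b : Ordinal) (h : b < o), IH b h)

/-- The Loewy length of a module: the least ordinal `o` with `loewy R M o = ⊤`. -/
noncomputable def loewyLength (R : Type u) [Ring R] (M : Type u) [AddCommGroup M]
    [Module R M] : Ordinal.{u} :=
  sInf {o : Ordinal | loewy R M o = ⊤}

/-- A ring is semiartinian if every nonzero module has a nonzero socle. -/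
def IsSemiartinianRing (R : Type u) [Ring R] : Prop :=
  ∀ (M : Type u) [AddCommGroup M] [Module R M], Nontrivial M → socle R M ≠ ⊥

/-- A ring is von Neumann regular if for every `r` there is `s` with `r * s * r = r`. -/
def IsVonNeumannRegularRing (R : Type u) [Ring R] : Prop :=
  ∀ r : R, ∃ s : R, r * s * r = r

/-- `R` has primitive factors artinian: for every primitive ideal `P` (= annihilator of a
simple module), the factor `R/P` is artinian. -/
def HasPrimitiveFactorsArtinian (R : Type u) [Ring R] : Prop :=
  ∀ (M : Type u) [AddCommGroup M] [Module R M], IsSimpleModule R M →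
    IsArtinian R (R ⧸ (Module.annihilator R M : Submodule R R))

/-- The `α`-th layer of the Loewy sequence of `R`, as a submodule of `R ⧸ loewy R R α`. -/
noncomputable def loewyLayer (R : Type u) [Ring R] (α : Ordinal.{u}) :
    Submodule R (R ⧸ loewy R R α) :=
  (loewy R R (α + 1)).map (loewy R R α).mkQ

/-- The canonical projection `π_α : S_{α+1} → S_{α+1}/S_α`. -/
noncomputable def layerProj (R : Type u) [Ring R] (α : Ordinal.{u}) :
    (loewy R R (α + 1) : Submodule R R) →ₗ[R] (loewyLayer R α) :=
  LinearMap.codRestrict _ ((loewy R R α).mkQ.comp (loewy R R (α + 1)).subtype)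
    (fun x => ⟨(x : R), x.2, rfl⟩)

/-- `M` is weakly `R`-projective: every homomorphism from `M` to a layer `S_{α+1}/S_α`
(`0 < α`) with finitely generated image factors through `π_α : S_{α+1} → S_{α+1}/S_α`. -/
def IsWeaklyRProjective (R : Type u) [Ring R] (M : Type u) [AddCommGroup M]
    [Module R M] : Prop :=
  ∀ α : Ordinal.{u}, 0 < α →
    ∀ φ : M →ₗ[R] (loewyLayer R α), (LinearMap.range φ).FG →
      ∃ ψ : M →ₗ[R] (loewy R R (α + 1) : Submodule R R), (layerProj R α).comp ψ = φ

/-- `M` is layer projective: for each `0 < α`, every simple submodule of the `α`-th layer of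
`M` is isomorphic to a simple (direct summand) submodule of the `α`-th layer of `R`, i.e. the
`α`-th layer of `M` is a projective `R/S_α`-module. -/
def IsLayerProjective (R : Type u) [Ring R] (M : Type u) [AddCommGroup M]
    [Module R M] : Prop :=
  ∀ α : Ordinal.{u}, 0 < α →
    ∀ T : Submodule R ((loewy R M (α + 1)).map (loewy R M α).mkQ), IsAtom T →
      ∃ T' : Submodule R (loewyLayer R α), IsAtom T' ∧ Nonempty (T ≃ₗ[R] T')

/-- The submodule `M·S` of `M`, generated by all products `s • m` with `s ∈ S`. -/
def smulSub (R : Type u) [Ring R] (M : Type u) [AddCommGroup M] [Module R M]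
    (S : Submodule R R) : Submodule R M :=
  Submodule.span R {x : M | ∃ s ∈ S, ∃ m : M, s • m = x}

section Aux

variable {R : Type u} [Ring R]

theorem map_isAtom_or_bot {M N : Type u} [AddCommGroup M] [AddCommGroup N] [Module R M]
    [Module R N] (f : M →ₗ[R] N) {A : Submodule R M} (hA : IsAtom A) :
    A.map f = ⊥ ∨ IsAtom (A.map f) := by
  haveI hs : IsSimpleModule R A := isSimpleModule_iff_isAtom.2 hA
  have hrange : LinearMap.range (f.comp A.subtype) = A.map f := by
    rw [LinearMap.range_comp, Submodule.range_subtype]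
  rcases eq_bot_or_eq_top (LinearMap.ker (f.comp A.subtype)) with hk | hk
  · right
    have hinj : Function.Injective (f.comp A.subtype) := LinearMap.ker_eq_bot.1 hk
    have : IsSimpleModule R (LinearMap.range (f.comp A.subtype)) :=
      IsSimpleModule.congr (LinearEquiv.ofInjective _ hinj).symm
    rw [hrange] at this
    exact isSimpleModule_iff_isAtom.1 this
  · left
    rw [← hrange, LinearMap.range_eq_bot]
    exact LinearMap.ker_eq_top.1 hk

theorem socle_map_le {M N : Type u} [AddCommGroup M] [AddCommGroup N] [Module R M]
    [Module R N] (f : M →ₗ[R] N) : (socle R M).map f ≤ socle R N := by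
  rw [socle, (Submodule.gc_map_comap f).l_sSup]
  refine iSup₂_le fun A hA => ?_
  rcases map_isAtom_or_bot f hA with h | h
  · rw [h]; exact bot_le
  · exact le_sSup h

variable {M : Type u} [AddCommGroup M] [Module R M]

theorem loewy_zero : loewy R M 0 = ⊥ :=
  Ordinal.limitRecOn_zero _ _ _

theorem loewy_succ (o : Ordinal.{u}) :
    loewy R M (Order.succ o) = (socle R (M ⧸ loewy R M o)).comap (loewy R M o).mkQ :=
  Ordinal.limitRecOn_succ _ _ _ _

theorem loewy_limit {o : Ordinal.{u}} (ho : Order.IsSuccLimit o) :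
    loewy R M o = ⨆ (b : Ordinal) (_ : b < o), loewy R M b :=
  Ordinal.limitRecOn_limit _ _ _ _ ho

theorem loewy_le_succ (o : Ordinal.{u}) : loewy R M o ≤ loewy R M (Order.succ o) := by
  rw [loewy_succ]
  intro x hx
  have : (loewy R M o).mkQ x = 0 := by
    rw [Submodule.mkQ_apply, Submodule.Quotient.mk_eq_zero]; exact hx
  rw [Submodule.mem_comap, this]
  exact zero_mem _

theorem loewy_mono : Monotone (loewy R M) := by
  intro a b
  induction b using Ordinal.induction with
  | h b IH =>
    intro hab
    rcases Ordinal.zero_or_succ_or_isSuccLimit b with rfl | ⟨c, rfl⟩ | hl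
    · exact le_of_eq (congrArg _ (nonpos_iff_eq_zero.1 hab))
    · rcases eq_or_lt_of_le hab with rfl | h
      · exact le_rfl
      · exact le_trans (IH c (Order.lt_succ c) (Order.lt_succ_iff.1 h)) (loewy_le_succ c)
    · rcases eq_or_lt_of_le hab with rfl | h
      · exact le_rfl
      · rw [loewy_limit hl]
        exact le_iSup₂_of_le a h le_rfl

theorem loewy_map_le {N : Type u} [AddCommGroup N] [Module R N] (f : M →ₗ[R] N)
    (o : Ordinal.{u}) : (loewy R M o).map f ≤ loewy R N o := by
  induction o using Ordinal.induction with
  | h o IH =>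
    rcases Ordinal.zero_or_succ_or_isSuccLimit o with rfl | ⟨c, rfl⟩ | hl
    · rw [loewy_zero, loewy_zero, Submodule.map_bot]
    · have hIH := IH c (Order.lt_succ c)
      rw [loewy_succ, loewy_succ]
      have hle : loewy R M c ≤ Submodule.comap f (loewy R N c) :=
        Submodule.map_le_iff_le_comap.1 hIH
      rintro y ⟨x, hx, rfl⟩
      simp only [SetLike.mem_coe, Submodule.mem_comap] at hx
      rw [Submodule.mem_comap]
      have hq : (loewy R N c).mkQ (f x) =
          Submodule.mapQ (loewy R M c) (loewy R N c) f hle ((loewy R M c).mkQ x) := by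
        simp [Submodule.mapQ_apply]
      rw [hq]
      exact socle_map_le _ (Submodule.mem_map_of_mem hx)
    · rw [loewy_limit hl, loewy_limit hl]
      simp only [Submodule.map_iSup]
      exact iSup₂_le fun b hb => le_iSup₂_of_le b hb (IH b hb)



theorem exists_loewy_eq_top (hsa : IsSemiartinianRing R) :
    ∃ o : Ordinal.{u}, loewy R M o = ⊤ := by
  by_contra h
  push_neg at h
  have hstep : ∀ o, loewy R M o < loewy R M (Order.succ o) := by
    intro o
    refine lt_of_le_of_ne (loewy_le_succ o) fun heq => ?_
    have hnt : Nontrivial (M ⧸ loewy R M o) :=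
      by
        obtain ⟨x, -, hx⟩ := SetLike.exists_of_lt (h o).lt_top
        exact ⟨⟨Submodule.Quotient.mk x, 0, fun e => hx ((Submodule.Quotient.mk_eq_zero _).1 e)⟩⟩
    refine hsa _ hnt ?_
    have h1 : (socle R (M ⧸ loewy R M o)).comap (loewy R M o).mkQ = loewy R M o := by
      rw [← loewy_succ, ← heq]
    have h2 := congrArg (Submodule.map (loewy R M o).mkQ) h1
    rw [Submodule.map_comap_eq_of_surjective (loewy R M o).mkQ_surjective] at h2
    rw [h2]
    refine le_bot_iff.1 ?_
    rintro y ⟨x, hx, rfl⟩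
    simp only [Submodule.mkQ_apply, SetLike.mem_coe] at *
    rw [Submodule.mem_bot, Submodule.Quotient.mk_eq_zero]
    exact hx
  have hmono : StrictMono (loewy R M) := by
    intro a b hab
    exact lt_of_lt_of_le (hstep a) (loewy_mono (Order.succ_le_of_lt hab))
  exact not_small_ordinal.{u, u} (small_of_injective hmono.injective)

theorem socle_complemented (Q : Type u) [AddCommGroup Q] [Module R Q] :
    ComplementedLattice (Submodule R (socle R Q)) := by
  apply complementedLattice_of_sSup_atoms_eq_top
  apply Submodule.map_injective_of_injective (Submodule.injective_subtype (socle R Q))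
  rw [Submodule.map_subtype_top, (Submodule.gc_map_comap (socle R Q).subtype).l_sSup]
  apply le_antisymm
  · refine iSup₂_le fun a ha => ?_
    rcases map_isAtom_or_bot (socle R Q).subtype ha with h | h
    · rw [h]; exact bot_le
    · exact le_sSup h
  · rw [socle]
    refine sSup_le fun A hA => ?_
    have hAle : A ≤ socle R Q := le_sSup hA
    have hmap : Submodule.map (socle R Q).subtype
        (Submodule.comap (socle R Q).subtype A) = A := by
      rw [Submodule.map_comap_subtype, inf_eq_right.2 hAle]
    have hatom : IsAtom (Submodule.comap (socle R Q).subtype A) := by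
      haveI : IsSimpleModule R A := isSimpleModule_iff_isAtom.2 hA
      haveI : IsSimpleModule R (Submodule.comap (socle R Q).subtype A) :=
        IsSimpleModule.congr (Submodule.comapSubtypeEquivOfLe hAle)
      exact isSimpleModule_iff_isAtom.1 this
    calc A = Submodule.map (socle R Q).subtype (Submodule.comap (socle R Q).subtype A) :=
            hmap.symm
    _ ≤ ⨆ a ∈ {a : Submodule R (socle R Q) | IsAtom a}, Submodule.map (socle R Q).subtype a :=
            le_iSup₂_of_le _ hatom le_rfl

theorem annihilator_mul_left {W : Type u} [AddCommGroup W] [Module R W] {a : R}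
    (ha : a ∈ Module.annihilator R W) (b : R) : a * b ∈ Module.annihilator R W := by
  rw [Module.mem_annihilator] at ha ⊢
  intro m
  rw [mul_smul, ha]

theorem quotient_annihilator_complemented (hvnr : IsVonNeumannRegularRing R)
    (W : Type u) [AddCommGroup W] [Module R W]
    (hart : IsArtinian R (R ⧸ (Module.annihilator R W : Submodule R R))) :
    ComplementedLattice (Submodule R (R ⧸ (Module.annihilator R W : Submodule R R))) := by
  set P : Submodule R R := (Module.annihilator R W : Submodule R R) with hP
  have cyclic_compl : ∀ z : R ⧸ P, ∃ K : Submodule R (R ⧸ P),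
      IsCompl (Submodule.span R {z}) K := by
    intro z
    obtain ⟨x, rfl⟩ := P.mkQ_surjective z
    obtain ⟨s, hs⟩ := hvnr x
    set e := s * x with he
    have hxe : x * e = x := by rw [he, ← mul_assoc, hs]
    have hee : e * e = e := by
      rw [he, mul_assoc, ← mul_assoc x s x, hs]
    have hspan : Submodule.span R {x} = Submodule.span R {e} := by
      apply le_antisymm
      · rw [Submodule.span_singleton_le_iff_mem]
        exact Submodule.mem_span_singleton.2 ⟨x, by rw [smul_eq_mul, hxe]⟩
      · rw [Submodule.span_singleton_le_iff_mem]
        exact Submodule.mem_span_singleton.2 ⟨s, by rw [smul_eq_mul, he]⟩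
    have hz : Submodule.span R {P.mkQ x} = Submodule.map P.mkQ (Submodule.span R {e}) := by
      rw [← hspan, Submodule.map_span, Set.image_singleton]
    refine ⟨Submodule.map P.mkQ (Submodule.span R {1 - e}), ?_, ?_⟩
    · rw [disjoint_iff, hz]
      refine le_bot_iff.1 ?_
      rintro w ⟨hw1, hw2⟩
      obtain ⟨u, hu, huw⟩ := hw1
      obtain ⟨v, hv, hvw⟩ := hw2
      obtain ⟨a, ha⟩ := Submodule.mem_span_singleton.1 hu
      obtain ⟨b, hb⟩ := Submodule.mem_span_singleton.1 hv
      have hsub : u - v ∈ P := by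
        rw [← Submodule.Quotient.eq]
        show P.mkQ u = P.mkQ v
        rw [huw, hvw]
      have hue : u * e = u := by
        rw [← ha, smul_eq_mul, mul_assoc, hee]
      have hve : v * e = 0 := by
        rw [← hb, smul_eq_mul, mul_assoc, sub_mul, one_mul, hee, sub_self, mul_zero]
      have huP : u ∈ P := by
        have : (u - v) * e ∈ P := annihilator_mul_left hsub e
        rwa [sub_mul, hue, hve, sub_zero] at this
      have : w = 0 := by
        rw [← huw, Submodule.mkQ_apply, Submodule.Quotient.mk_eq_zero]
        exact huP
      simp [this]
    · rw [codisjoint_iff, hz, ← Submodule.map_sup]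
      have htop : Submodule.span R {e} ⊔ Submodule.span R {1 - e} = ⊤ := by
        rw [eq_top_iff]
        intro r _
        refine Submodule.mem_sup.2 ⟨r * e, ?_, r * (1 - e), ?_, ?_⟩
        · exact Submodule.mem_span_singleton.2 ⟨r, by rw [smul_eq_mul]⟩
        · exact Submodule.mem_span_singleton.2 ⟨r, by rw [smul_eq_mul]⟩
        · rw [mul_sub, mul_one]; abel
      rw [htop, Submodule.map_top, Submodule.range_mkQ]
  constructor
  intro J
  have hwf : WellFounded ((· < ·) : Submodule R (R ⧸ P) → Submodule R (R ⧸ P) → Prop) :=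
    (isArtinian_iff _ _).1 hart
  set s : Set (Submodule R (R ⧸ P)) := {N | J ⊔ N = ⊤} with hsdef
  have hne : s.Nonempty := ⟨⊤, sup_top_eq J⟩
  set N := hwf.min s hne with hNdef
  have hNs : J ⊔ N = ⊤ := hwf.min_mem s hne
  refine ⟨N, ?_, codisjoint_iff.2 hNs⟩
  rw [disjoint_iff]
  by_contra hne0
  obtain ⟨z, hzJN, hz0⟩ := (Submodule.ne_bot_iff _).1 hne0
  obtain ⟨K, hK⟩ := cyclic_compl z
  have hspanJ : Submodule.span R {z} ≤ J :=
    (Submodule.span_singleton_le_iff_mem _ _).2 hzJN.1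
  have hspanN : Submodule.span R {z} ≤ N :=
    (Submodule.span_singleton_le_iff_mem _ _).2 hzJN.2
  have hmemNK : N ⊓ K ∈ s := by
    show J ⊔ (N ⊓ K) = ⊤
    rw [eq_top_iff]
    intro m _
    have hm : m ∈ J ⊔ N := by rw [hNs]; trivial
    obtain ⟨j, hj, n, hn, rfl⟩ := Submodule.mem_sup.1 hm
    have hn2 : n ∈ Submodule.span R {z} ⊔ K := by rw [hK.sup_eq_top]; trivial
    obtain ⟨r, hr, k, hk, rfl⟩ := Submodule.mem_sup.1 hn2
    refine Submodule.mem_sup.2 ⟨j + r, Submodule.add_mem _ hj (hspanJ hr), k,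
      ⟨?_, hk⟩, by abel⟩
    have : k = (r + k) - r := by abel
    rw [this]
    exact Submodule.sub_mem _ hn (hspanN hr)
  have hnotlt : ¬ (N ⊓ K < N) := hwf.not_lt_min s hmemNK
  have hNK : N ⊓ K = N := (lt_or_eq_of_le inf_le_left).resolve_left hnotlt
  have hzK : z ∈ K := by
    have hzN : z ∈ N ⊓ K := by rw [hNK]; exact hzJN.2
    exact hzN.2
  have : z ∈ Submodule.span R {z} ⊓ K := ⟨Submodule.mem_span_singleton_self z, hzK⟩
  rw [disjoint_iff.1 hK.disjoint] at this
  exact hz0 this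

theorem baer_of_simple (hvnr : IsVonNeumannRegularRing R)
    (hpfa : HasPrimitiveFactorsArtinian R) (W : Type u) [AddCommGroup W] [Module R W]
    (hW : IsSimpleModule R W) : Module.Baer R W := by
  intro I g
  set P : Submodule R R := (Module.annihilator R W : Submodule R R) with hP
  haveI hcompl : ComplementedLattice (Submodule R (R ⧸ P)) :=
    quotient_annihilator_complemented hvnr W (hpfa W hW)
  -- step 1 : g vanishes on I ∩ P
  have hker0 : ∀ a : ↥I, (a : R) ∈ P → g a = 0 := by
    intro a ha
    obtain ⟨b, hb⟩ := hvnr (a : R)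
    have h2 : (((a : R) * b) • a : ↥I) = a := by
      ext
      simp only [SetLike.val_smul, smul_eq_mul]
      rw [mul_assoc, ← mul_assoc, hb]
    have h3 : g a = ((a : R) * b) • g a := by
      conv_lhs => rw [← h2]
      rw [map_smul]
    rw [h3, mul_smul]
    have := Module.mem_annihilator.1 ha (b • g a)
    exact this
  -- the image J of I in R ⧸ P
  set q : R →ₗ[R] R ⧸ P := P.mkQ with hq
  set J : Submodule R (R ⧸ P) := Submodule.map q I with hJ
  set F : ↥I →ₗ[R] ↥J :=
    LinearMap.codRestrict J (q.comp I.subtype)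
      (fun a => Submodule.mem_map_of_mem a.2) with hF
  have hFsurj : Function.Surjective F := by
    rintro ⟨y, hy⟩
    obtain ⟨x, hx, rfl⟩ := hy
    exact ⟨⟨x, hx⟩, rfl⟩
  have hKg : LinearMap.ker F ≤ LinearMap.ker g := by
    intro a haF
    rw [LinearMap.mem_ker] at haF ⊢
    have : q (a : R) = 0 := congrArg Subtype.val haF
    rw [hq, Submodule.mkQ_apply, Submodule.Quotient.mk_eq_zero] at this
    exact hker0 a this
  set equiv := F.quotKerEquivOfSurjective hFsurj with hequiv
  set jhat : ↥J →ₗ[R] W :=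
    (Submodule.liftQ (LinearMap.ker F) g hKg).comp equiv.symm.toLinearMap with hjhat
  have hjF : ∀ a : ↥I, jhat (F a) = g a := by
    intro a
    have h1 : equiv (Submodule.Quotient.mk a) = F a := by
      rw [hequiv]
      rfl
    have h2 : equiv.symm (F a) = Submodule.Quotient.mk a := by
      rw [← h1, LinearEquiv.symm_apply_apply]
    simp only [hjhat, LinearMap.comp_apply, LinearEquiv.coe_coe, h2]
    exact Submodule.liftQ_apply _ _ _
  obtain ⟨C, hC⟩ := exists_isCompl J
  set pr := Submodule.projectionOnto J C hC with hpr
  refine ⟨jhat.comp (pr.comp q), fun x hx => ?_⟩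
  have hmem : q x ∈ J := Submodule.mem_map_of_mem hx
  have h4 : pr (q x) = ⟨q x, hmem⟩ := by
    have := Submodule.linearProjOfIsCompl_apply_left hC (⟨q x, hmem⟩ : ↥J)
    rw [hpr]
    convert this using 2
  have h5 : (⟨q x, hmem⟩ : ↥J) = F ⟨x, hx⟩ := rfl
  have h6 : jhat (pr (q x)) = g ⟨x, hx⟩ := by rw [h4, h5, hjF]
  exact h6

theorem exists_lt_of_mem_loewy_limit {o : Ordinal.{u}} (ho : Order.IsSuccLimit o) {x : M}
    (hx : x ∈ loewy R M o) : ∃ b, b < o ∧ x ∈ loewy R M b := by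
  rw [loewy_limit ho, iSup_subtype'] at hx
  have hdir : Directed (· ≤ ·)
      (fun b : {b : Ordinal.{u} // b < o} => loewy R M b.1) := by
    intro b b'
    rcases le_total b.1 b'.1 with h | h
    exacts [⟨b', loewy_mono h, le_rfl⟩, ⟨b, le_rfl, loewy_mono h⟩]
  haveI : Nonempty {b : Ordinal.{u} // b < o} := ⟨⟨0, ho.pos⟩⟩
  obtain ⟨⟨b, hb⟩, hxb⟩ := (Submodule.mem_iSup_of_directed _ hdir).1 hx
  exact ⟨b, hb, hxb⟩

theorem smul_mem_smulSub {S : Submodule R R} {s : R} (hs : s ∈ S) (m : M) :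
    s • m ∈ smulSub R M S :=
  Submodule.subset_span ⟨s, hs, m, rfl⟩

theorem smulSub_mono {S S' : Submodule R R} (h : S ≤ S') :
    smulSub R M S ≤ smulSub R M S' := by
  apply Submodule.span_mono
  rintro x ⟨s, hs, m, hm⟩
  exact ⟨s, h hs, m, hm⟩

theorem smulSub_le_loewy (o : Ordinal.{u}) : smulSub R M (loewy R R o) ≤ loewy R M o := by
  rw [smulSub, Submodule.span_le]
  rintro x ⟨s, hs, m, rfl⟩
  have := loewy_map_le (LinearMap.toSpanSingleton R M m) o (Submodule.mem_map_of_mem hs)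
  rw [LinearMap.toSpanSingleton_apply] at this
  exact this

theorem atom_le_map_smulSub
    (hsa : IsSemiartinianRing R) (hvnr : IsVonNeumannRegularRing R)
    (hpfa : HasPrimitiveFactorsArtinian R)
    (hM : IsWeaklyRProjective R M) (c : Ordinal.{u})
    {T : Submodule R (M ⧸ loewy R M c)} (hT : IsAtom T) :
    T ≤ Submodule.map (loewy R M c).mkQ (smulSub R M (loewy R R (c + 1))) := by
  classical
  set Pred : Ordinal.{u} → Prop :=
    fun δ => ∃ s ∈ loewy R R δ, ∃ t ∈ T, s • t ≠ 0 with hPreddef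
  have hPredmono : ∀ {δ δ' : Ordinal.{u}}, δ ≤ δ' → Pred δ → Pred δ' := by
    rintro δ δ' h ⟨s, hs, t, ht, hst⟩
    exact ⟨s, loewy_mono h hs, t, ht, hst⟩
  have hPredex : (setOf Pred).Nonempty := by
    obtain ⟨o, ho⟩ := exists_loewy_eq_top (R := R) (M := R) hsa
    obtain ⟨t, ht, ht0⟩ := (Submodule.ne_bot_iff T).1 hT.1
    exact ⟨o, 1, by rw [ho]; trivial, t, ht, by rwa [one_smul]⟩
  set δmin : Ordinal.{u} := Ordinal.lt_wf.min (setOf Pred) hPredex with hδdef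
  have hδmem : Pred δmin := Ordinal.lt_wf.min_mem (setOf Pred) hPredex
  have hδmin : ∀ δ, Pred δ → ¬ δ < δmin :=
    fun δ hδ => Ordinal.lt_wf.not_lt_min (setOf Pred) hδ
  have hδ0 : δmin ≠ 0 := by
    intro h0
    obtain ⟨s, hs, t, ht, hst⟩ := hδmem
    rw [h0, loewy_zero, Submodule.mem_bot] at hs
    exact hst (by rw [hs, zero_smul])
  have hδnl : ¬ Order.IsSuccLimit δmin := by
    intro hl
    obtain ⟨s, hs, t, ht, hst⟩ := hδmem
    obtain ⟨b, hb, hsb⟩ := exists_lt_of_mem_loewy_limit hl hs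
    exact hδmin b ⟨s, hsb, t, ht, hst⟩ hb
  obtain ⟨γ, hγ⟩ := ((Ordinal.zero_or_succ_or_isSuccLimit δmin).resolve_left hδ0).resolve_right hδnl
  have hPc : ¬ Pred c := by
    rintro ⟨s, hs, t, ht, hst⟩
    apply hst
    obtain ⟨y, rfl⟩ := (loewy R M c).mkQ_surjective t
    have h1 : s • (loewy R M c).mkQ y = (loewy R M c).mkQ (s • y) := (map_smul _ _ _).symm
    rw [h1, Submodule.mkQ_apply, Submodule.Quotient.mk_eq_zero]
    have := loewy_map_le (LinearMap.toSpanSingleton R M y) c (Submodule.mem_map_of_mem hs)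
    rwa [LinearMap.toSpanSingleton_apply] at this
  have hcδ : c < δmin := by
    by_contra hcon
    push_neg at hcon
    exact hPc (hPredmono hcon hδmem)
  have hcγ : c ≤ γ := by
    rw [← hγ] at hcδ
    exact Order.lt_succ_iff.1 hcδ
  have hPγ : ∀ s ∈ loewy R R γ, ∀ t ∈ T, s • t = 0 := by
    intro s hs t ht
    by_contra hne
    exact hδmin γ ⟨s, hs, t, ht, hne⟩ (hγ ▸ Order.lt_succ γ)
  obtain ⟨s0, hs0, t0, ht0, hst0⟩ := hδmem
  rw [← hγ, ← Ordinal.add_one_eq_succ] at hs0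
  rcases eq_or_lt_of_le hcγ with rfl | hlt
  · -- γ = c : conclude directly
    set Y : Submodule R (M ⧸ loewy R M c) :=
      Submodule.span R {y | ∃ s ∈ loewy R R (c + 1), ∃ t ∈ T, s • t = y} with hY
    have hYle : Y ≤ T := by
      rw [hY, Submodule.span_le]
      rintro y ⟨s, hs, t, ht, rfl⟩
      exact T.smul_mem s ht
    have hYne : Y ≠ ⊥ := by
      intro hbot
      apply hst0
      have : s0 • t0 ∈ Y := Submodule.subset_span ⟨s0, hs0, t0, ht0, rfl⟩
      rwa [hbot, Submodule.mem_bot] at this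
    have hYT : Y = T := (hT.le_iff.1 hYle).resolve_left hYne
    rw [← hYT, hY, Submodule.span_le]
    rintro y ⟨s, hs, t, ht, rfl⟩
    obtain ⟨m, rfl⟩ := (loewy R M c).mkQ_surjective t
    have h1 : s • (loewy R M c).mkQ m = (loewy R M c).mkQ (s • m) := (map_smul _ _ _).symm
    rw [h1]
    exact Submodule.mem_map_of_mem (smul_mem_smulSub hs m)
  · -- γ > c : contradiction via weak projectivity
    exfalso
    have ht00 : t0 ≠ 0 := fun h => hst0 (by rw [h, smul_zero])
    set u0 : R →ₗ[R] (M ⧸ loewy R M c) := LinearMap.toSpanSingleton R _ t0 with hu0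
    have hu0mem : ∀ r : R, u0 r ∈ T := by
      intro r
      rw [hu0, LinearMap.toSpanSingleton_apply]
      exact T.smul_mem r ht0
    set u1 : R →ₗ[R] ↥T := LinearMap.codRestrict T u0 hu0mem with hu1
    have hu1γ : loewy R R γ ≤ LinearMap.ker u1 := by
      intro s hs
      rw [LinearMap.mem_ker]
      apply Subtype.ext
      show u0 s = 0
      rw [hu0, LinearMap.toSpanSingleton_apply]
      exact hPγ s hs t0 ht0
    set u2 : (R ⧸ loewy R R γ) →ₗ[R] ↥T := Submodule.liftQ _ u1 hu1γ with hu2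
    set V : ↥(loewyLayer R γ) →ₗ[R] ↥T := u2.comp (loewyLayer R γ).subtype with hV
    have hs0mem : (loewy R R γ).mkQ s0 ∈ loewyLayer R γ :=
      Submodule.mem_map_of_mem hs0
    have hVs0 : (V ⟨(loewy R R γ).mkQ s0, hs0mem⟩ : M ⧸ loewy R M c) = s0 • t0 := by
      have h1 : V ⟨(loewy R R γ).mkQ s0, hs0mem⟩ = u1 s0 := by
        rw [hV]
        simp only [LinearMap.comp_apply]
        have h2 : (loewyLayer R γ).subtype ⟨(loewy R R γ).mkQ s0, hs0mem⟩
            = Submodule.Quotient.mk s0 := rfl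
        rw [h2, hu2, Submodule.liftQ_apply]
      rw [h1, hu1, LinearMap.codRestrict_apply, hu0, LinearMap.toSpanSingleton_apply]
    have hV0 : V ⟨(loewy R R γ).mkQ s0, hs0mem⟩ ≠ 0 := by
      intro h
      apply hst0
      rw [← hVs0, h]
      rfl
    haveI hTsimple : IsSimpleModule R ↥T := isSimpleModule_iff_isAtom.2 hT
    haveI : ComplementedLattice (Submodule R ↥(loewyLayer R γ)) := by
      have hlayer : loewyLayer R γ = socle R (R ⧸ loewy R R γ) := by
        rw [loewyLayer, Ordinal.add_one_eq_succ, loewy_succ,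
          Submodule.map_comap_eq_of_surjective (loewy R R γ).mkQ_surjective]
      rw [hlayer]
      exact socle_complemented _
    obtain ⟨C, hC⟩ := exists_isCompl (LinearMap.ker V)
    have hinj : Function.Injective (V.comp C.subtype) := by
      intro a b hab
      have h1 : V ((a : ↥(loewyLayer R γ)) - b) = 0 := by
        rw [map_sub, sub_eq_zero]
        exact hab
      have h2 : ((a : ↥(loewyLayer R γ)) - b) ∈ LinearMap.ker V ⊓ C :=
        ⟨h1, Submodule.sub_mem _ a.2 b.2⟩
      rw [disjoint_iff.1 hC.disjoint, Submodule.mem_bot] at h2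
      exact Subtype.ext (sub_eq_zero.1 h2)
    have hVsurj : Function.Surjective V := by
      rw [← LinearMap.range_eq_top]
      rcases eq_bot_or_eq_top (LinearMap.range V) with h | h
      · exfalso
        apply hV0
        have hm : V ⟨(loewy R R γ).mkQ s0, hs0mem⟩ ∈ LinearMap.range V :=
          LinearMap.mem_range_self _ _
        rw [h, Submodule.mem_bot] at hm
        exact hm
      · exact h
    have hsurj : Function.Surjective (V.comp C.subtype) := by
      intro t
      obtain ⟨y, rfl⟩ := hVsurj t
      have hy : y ∈ LinearMap.ker V ⊔ C := by rw [hC.sup_eq_top]; trivial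
      obtain ⟨k, hk, cc, hcc, rfl⟩ := Submodule.mem_sup.1 hy
      refine ⟨⟨cc, hcc⟩, ?_⟩
      have : V cc = V (k + cc) := by
        rw [map_add, LinearMap.mem_ker.1 hk, zero_add]
      simpa [LinearMap.comp_apply] using this
    set e1 : ↥C ≃ₗ[R] ↥T := LinearEquiv.ofBijective (V.comp C.subtype) ⟨hinj, hsurj⟩ with he1
    haveI hCsimple : IsSimpleModule R ↥C := IsSimpleModule.congr e1
    have hinjC : Module.Injective R ↥C := (baer_of_simple hvnr hpfa _ hCsimple).injective
    obtain ⟨Φ, hΦ⟩ := hinjC.out T.subtype (Submodule.injective_subtype T) e1.symm.toLinearMap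
    set φ : M →ₗ[R] ↥(loewyLayer R γ) :=
      (C.subtype.comp Φ).comp (loewy R M c).mkQ with hφ
    have hCatom : IsAtom C := isSimpleModule_iff_isAtom.1 hCsimple
    have hrange : LinearMap.range φ ≤ C := by
      rintro y ⟨x, rfl⟩
      exact (Φ ((loewy R M c).mkQ x)).2
    have hFG : (LinearMap.range φ).FG := by
      rcases hCatom.le_iff.1 hrange with h | h
      · rw [h]; exact Submodule.fg_bot
      · rw [h]
        obtain ⟨cc, hcc, hcc0⟩ := (Submodule.ne_bot_iff C).1 hCatom.1
        have hle : Submodule.span R {cc} ≤ C :=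
          (Submodule.span_singleton_le_iff_mem _ _).2 hcc
        rcases hCatom.le_iff.1 hle with h' | h'
        · exfalso
          apply hcc0
          have hmm : cc ∈ Submodule.span R {cc} := Submodule.mem_span_singleton_self cc
          rw [h', Submodule.mem_bot] at hmm
          exact hmm
        · rw [← h']
          exact Submodule.fg_span_singleton cc
    have hγ0 : (0 : Ordinal.{u}) < γ := lt_of_le_of_lt (zero_le (a := c)) hlt
    obtain ⟨ψ, hψ⟩ := hM γ hγ0 φ hFG
    obtain ⟨x, hx⟩ := (loewy R M c).mkQ_surjective t0
    have hxmem : x ∈ loewy R M (c + 1) := by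
      rw [Ordinal.add_one_eq_succ, loewy_succ, Submodule.mem_comap, hx]
      exact le_sSup (show T ∈ {S : Submodule R (M ⧸ loewy R M c) | IsAtom S} from hT) ht0
    have hφx : φ x ≠ 0 := by
      intro h
      have h1 : (loewy R M c).mkQ x = T.subtype ⟨t0, ht0⟩ := by
        rw [hx]
        rfl
      have h2 : φ x = C.subtype (e1.symm ⟨t0, ht0⟩) := by
        rw [hφ]
        simp only [LinearMap.comp_apply]
        rw [h1, hΦ]
        rfl
      rw [h2] at h
      have h3 : e1.symm ⟨t0, ht0⟩ = 0 := by
        apply Submodule.injective_subtype C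
        rw [h]
        simp
      have h4 : (⟨t0, ht0⟩ : ↥T) = 0 := by
        apply e1.symm.injective
        rw [h3]
        simp
      exact ht00 (congrArg Subtype.val h4)
    apply hφx
    have hψx : (ψ x : R) ∈ loewy R R γ := by
      have h1 : ψ x ∈ Submodule.map ψ (loewy R M (c + 1)) := Submodule.mem_map_of_mem hxmem
      have h2 : ψ x ∈ loewy R ↥(loewy R R (γ + 1)) (c + 1) := loewy_map_le ψ (c + 1) h1
      have h3 : (ψ x : R) ∈ loewy R R (c + 1) := by
        have := loewy_map_le (loewy R R (γ + 1)).subtype (c + 1) (Submodule.mem_map_of_mem h2)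
        rwa [Submodule.subtype_apply] at this
      refine loewy_mono ?_ h3
      rw [Ordinal.add_one_eq_succ]
      exact Order.succ_le_of_lt hlt
    have h5 : φ x = (layerProj R γ).comp ψ x := by rw [hψ]
    rw [h5, LinearMap.comp_apply, ← ZeroMemClass.coe_eq_zero]
    show ((loewy R R γ).mkQ.comp (loewy R R (γ + 1)).subtype) (ψ x) = 0
    rw [LinearMap.comp_apply, Submodule.subtype_apply, Submodule.mkQ_apply,
      Submodule.Quotient.mk_eq_zero]
    exact hψx

end Aux

/-- Over a semiartinian von Neumann regular ring with primitive factors artinian, the socle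
sequence of a weakly `R`-projective module `M` is given by `M_β = M·S_β` for every `β`. -/
theorem loewy_eq_smul_of_weaklyRProjective
    (R : Type u) [Ring R] (hsa : IsSemiartinianRing R)
    (hvnr : IsVonNeumannRegularRing R) (hpfa : HasPrimitiveFactorsArtinian R)
    (M : Type u) [AddCommGroup M] [Module R M]
    (hM : IsWeaklyRProjective R M) :
    ∀ β : Ordinal.{u}, loewy R M β = smulSub R M (loewy R R β) := by
  intro β
  induction β using Ordinal.induction with
  | h β IH =>
    rcases Ordinal.zero_or_succ_or_isSuccLimit β with rfl | ⟨c, rfl⟩ | hl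
    · rw [loewy_zero, loewy_zero]
      refine (le_antisymm ?_ bot_le).symm
      rw [smulSub, Submodule.span_le]
      rintro x ⟨s, hs, m, rfl⟩
      rw [Submodule.mem_bot] at hs
      simp [hs]
    · have hc := IH c (Order.lt_succ c)
      apply le_antisymm
      · rw [loewy_succ]
        intro x hx
        rw [Submodule.mem_comap] at hx
        have hsocle : socle R (M ⧸ loewy R M c) ≤
            Submodule.map (loewy R M c).mkQ (smulSub R M (loewy R R (Order.succ c))) := by
          rw [socle]
          refine sSup_le fun T hT => ?_
          have := atom_le_map_smulSub hsa hvnr hpfa hM c hT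
          rwa [Ordinal.add_one_eq_succ] at this
        have hx2 : x ∈ Submodule.comap (loewy R M c).mkQ
            (Submodule.map (loewy R M c).mkQ (smulSub R M (loewy R R (Order.succ c)))) :=
          hsocle hx
        rw [Submodule.comap_map_eq, Submodule.ker_mkQ] at hx2
        have hsub : loewy R M c ≤ smulSub R M (loewy R R (Order.succ c)) := by
          rw [hc]
          exact smulSub_mono (loewy_mono (Order.le_succ c))
        exact sup_le le_rfl hsub hx2
      · exact smulSub_le_loewy _
    · conv_lhs => rw [loewy_limit hl]
      apply le_antisymm
      · refine iSup₂_le fun b hb => ?_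
        rw [IH b hb]
        exact smulSub_mono (loewy_mono hb.le)
      · rw [smulSub, Submodule.span_le]
        rintro y ⟨s, hs, m, rfl⟩
        obtain ⟨b, hb, hsb⟩ := exists_lt_of_mem_loewy_limit hl hs
        have h1 : s • m ∈ loewy R M b := smulSub_le_loewy b (smul_mem_smulSub hsb m)
        have h2 : loewy R M b ≤ ⨆ (b' : Ordinal.{u}), ⨆ (_ : b' < β), loewy R M b' :=
          le_iSup₂_of_le b hb le_rfl
        exact h2 h1
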